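/- arXiv:0711.3768 — 2 statements merged into one kernel-verified Lean document; each statement's English description precedes it below -/
import Mathlib

section
/- For any nonempty set Γ, the closed unit ball of ℓ^∞(Γ) (real-valued bounded functions on Γ with the sup norm) equals the closed convex hull of the set {−1, 1}^Γ of all functions Γ → {−1, 1}. -/
lemma sign_sum_eq (n m : ℕ) (hm : m ≤ n) :
    ∑ k ∈ Finset.range n, (if k < m then (1:ℝ) else -1) = 2*m - n := by
  have h : (Finset.range n).filter (fun k => k < m) = Finset.range m := by
    ext k
    simp only [Finset.mem_filter, Finset.mem_range]
    omega
  rw [Finset.sum_ite, h, Finset.sum_const, Finset.sum_const]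
  have h2 : ((Finset.range n).filter (fun k => ¬ k < m)).card = n - m := by
    have : (Finset.range n).filter (fun k => ¬ k < m) = Finset.Ico m n := by
      ext k; simp only [Finset.mem_filter, Finset.mem_range, Finset.mem_Ico]; omega
    rw [this, Nat.card_Ico]
  rw [h2, Finset.card_range]
  simp only [nsmul_eq_mul, mul_one, mul_neg_one]
  rw [Nat.cast_sub hm]
  ring

lemma avg_close (n : ℕ) (hn : 0 < n) (a : ℝ) (ha : |a| ≤ 1) :
    |(∑ k ∈ Finset.range n, (if (2*k+1 : ℝ) ≤ n*(a+1) then (1:ℝ) else -1)) - n * a| ≤ 1 := by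
  obtain ⟨ha1, ha2⟩ := abs_le.1 ha
  set r : ℝ := (n*(a+1)+1)/2 with hr
  have hr0 : 0 ≤ r := by
    have : (0:ℝ) ≤ n*(a+1) := mul_nonneg (Nat.cast_nonneg n) (by linarith)
    positivity
  set m := ⌊r⌋₊ with hm
  have hmn : m ≤ n := by
    have hrlt : r < n + 1 := by
      have hn1 : (1:ℝ) ≤ n := Nat.one_le_cast.2 hn
      have hna : (n:ℝ)*(a+1) ≤ 2*n := by nlinarith
      rw [hr]; linarith
    have h3 : m < n + 1 := (Nat.floor_lt hr0).2 (by push_cast; linarith)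
    omega
  have hcond : ∀ k : ℕ, ((2*k+1 : ℝ) ≤ n*(a+1)) ↔ k < m := by
    intro k
    constructor
    · intro h
      have : ((k+1 : ℕ) : ℝ) ≤ r := by push_cast; rw [hr]; linarith
      have := Nat.le_floor this
      omega
    · intro h
      have : ((k+1 : ℕ) : ℝ) ≤ r := by
        exact_mod_cast (Nat.le_floor_iff hr0).1 (by omega)
      push_cast at this
      rw [hr] at this; linarith
  have hsum : (∑ k ∈ Finset.range n, (if (2*k+1 : ℝ) ≤ n*(a+1) then (1:ℝ) else -1))
      = 2*m - n := by
    rw [← sign_sum_eq n m hmn]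
    exact Finset.sum_congr rfl fun k _ => by rw [if_congr (hcond k) rfl rfl]
  rw [hsum]
  have h1 : (m:ℝ) ≤ r := Nat.floor_le hr0
  have h2 : r < m + 1 := Nat.lt_floor_add_one r
  rw [hr] at h1 h2
  rw [abs_le]
  constructor <;> nlinarith

theorem stmt_3 (Γ : Type*) [Nonempty Γ] :
    (Metric.closedBall (0 : lp (fun _ : Γ => ℝ) ⊤) 1) =
      closure (convexHull ℝ {x : lp (fun _ : Γ => ℝ) ⊤ | ∀ γ, x γ = 1 ∨ x γ = -1}) := by
  set S := {x : lp (fun _ : Γ => ℝ) ⊤ | ∀ γ, x γ = 1 ∨ x γ = -1} with hS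
  apply le_antisymm
  · -- ball ⊆ closure of convex hull
    intro x hx
    have hxn : ‖x‖ ≤ 1 := mem_closedBall_zero_iff.1 hx
    have hxa : ∀ γ, |x γ| ≤ 1 := fun γ =>
      le_trans (by rw [← Real.norm_eq_abs]; exact lp.norm_apply_le_norm ENNReal.top_ne_zero x γ) hxn
    rw [Metric.mem_closure_iff]
    intro ε hε
    obtain ⟨n, hn⟩ := exists_nat_one_div_lt hε
    set N := n + 1 with hN
    have hN0 : 0 < N := Nat.succ_pos n
    have hN0' : (0:ℝ) < N := Nat.cast_pos.2 hN0
    -- sign functions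
    have hmem : ∀ k : ℕ, Memℓp (fun γ : Γ => if (2*k+1 : ℝ) ≤ N*(x γ + 1) then (1:ℝ) else -1) ⊤ := by
      intro k
      apply memℓp_infty
      refine ⟨1, ?_⟩
      rintro r ⟨γ, rfl⟩
      dsimp
      split <;> simp
    set g : ℕ → lp (fun _ : Γ => ℝ) ⊤ := fun k => ⟨_, hmem k⟩ with hg
    have hgS : ∀ k, g k ∈ S := by
      intro k γ
      have hcoe : (g k : ∀ _ : Γ, ℝ) γ = (if (2*k+1 : ℝ) ≤ N*(x γ + 1) then (1:ℝ) else -1) := rfl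
      rw [hcoe]
      split
      · exact Or.inl rfl
      · exact Or.inr rfl
    set y : lp (fun _ : Γ => ℝ) ⊤ := ∑ k ∈ Finset.range N, (1/(N:ℝ)) • g k with hy
    refine ⟨y, ?_, ?_⟩
    · apply (convex_convexHull ℝ S).sum_mem
      · intro k _; positivity
      · rw [Finset.sum_const, Finset.card_range]
        rw [nsmul_eq_mul]; field_simp
      · intro k _; exact subset_convexHull ℝ S (hgS k)
    · rw [dist_eq_norm]
      have hb : ‖x - y‖ ≤ 1 / N := by
        apply lp.norm_le_of_forall_le (by positivity)
        intro γ
        have hyγ : y γ = (1/(N:ℝ)) * ∑ k ∈ Finset.range N,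
            (if (2*k+1 : ℝ) ≤ N*(x γ + 1) then (1:ℝ) else -1) := by
          rw [hy, lp.coeFn_sum]
          rw [Finset.sum_apply]
          rw [Finset.mul_sum]
          refine Finset.sum_congr rfl fun k _ => ?_
          rw [lp.coeFn_smul]
          rfl
        have hsub : (x - y) γ = x γ - y γ := by rw [lp.coeFn_sub]; rfl
        rw [hsub, hyγ, Real.norm_eq_abs]
        set T : ℝ := ∑ k ∈ Finset.range N,
            (if (2*k+1 : ℝ) ≤ N*(x γ + 1) then (1:ℝ) else -1) with hT
        have heq : x γ - 1/(N:ℝ) * T = 1/(N:ℝ) * -(T - N * x γ) := by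
          field_simp; ring
        rw [heq, abs_mul, abs_neg, abs_of_pos (show (0:ℝ) < 1/N by positivity)]
        have hkey := avg_close N hN0 (x γ) (hxa γ)
        rw [← hT] at hkey
        have h1N : (0:ℝ) < 1/N := by positivity
        nlinarith [abs_nonneg (T - N * x γ), hkey]
      calc ‖x - y‖ ≤ 1 / N := hb
        _ < ε := by simp only [hN]; push_cast; exact hn
  · -- closure of convex hull ⊆ ball
    apply closure_minimal
    · apply convexHull_min _ (convex_closedBall 0 1)
      intro z hz
      rw [Metric.mem_closedBall, dist_zero_right]
      apply lp.norm_le_of_forall_le zero_le_one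
      intro γ
      rcases hz γ with h | h <;> rw [h] <;> simp
    · exact Metric.isClosed_closedBall
end

section
/- Let 𝒰 be a non-principal ultrafilter on ℕ and let A, B ⊆ ℕ be infinite sets with A ∉ 𝒰 and B ∉ 𝒰. Then there exists a permutation h : ℕ → ℕ such that h(A) = B, and for every U ⊆ ℕ, h(U) ∈ 𝒰 if and only if U ∈ 𝒰. -/
open Function
open scoped Classical

noncomputable def pfaux (A S : Set ℕ) {B : Set ℕ} (e : ↥A ≃ ↥B) (e' : ↥(S \ A) ≃ ↥(S \ B)) :
    ℕ → ℕ :=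
  fun n => if h : n ∈ A then (e ⟨n, h⟩ : ℕ) else if h' : n ∈ S \ A then (e' ⟨n, h'⟩ : ℕ) else n

lemma pfaux_left (A B S : Set ℕ) (hBS : B ⊆ S) (e : ↥A ≃ ↥B) (e' : ↥(S \ A) ≃ ↥(S \ B)) :
    Function.LeftInverse (pfaux B S e.symm e'.symm) (pfaux A S e e') := by
  intro n
  unfold pfaux
  by_cases h : n ∈ A
  · rw [dif_pos h, dif_pos (e ⟨n, h⟩).2]
    simp
  · rw [dif_neg h]
    by_cases h' : n ∈ S \ A
    · rw [dif_pos h', dif_neg (e' ⟨n, h'⟩).2.2, dif_pos (e' ⟨n, h'⟩).2]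
      simp
    · rw [dif_neg h']
      have hnS : n ∉ S := fun hS => h' ⟨hS, h⟩
      rw [dif_neg (fun hb => hnS (hBS hb)), dif_neg (fun hb => hnS hb.1)]

lemma pfaux_mem_S (A B S : Set ℕ) (hBS : B ⊆ S) (e : ↥A ≃ ↥B) (e' : ↥(S \ A) ≃ ↥(S \ B))
    {n : ℕ} (hn : n ∈ S) : pfaux A S e e' n ∈ S := by
  unfold pfaux
  by_cases h : n ∈ A
  · rw [dif_pos h]; exact hBS (e ⟨n, h⟩).2
  · have hd : n ∈ S \ A := ⟨hn, h⟩
    rw [dif_neg h, dif_pos hd]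
    exact (e' ⟨n, hd⟩).2.1

lemma pfaux_fix (A S : Set ℕ) {B : Set ℕ} (e : ↥A ≃ ↥B) (e' : ↥(S \ A) ≃ ↥(S \ B))
    {n : ℕ} (hn : n ∉ S) (hAS : A ⊆ S) : pfaux A S e e' n = n := by
  unfold pfaux
  rw [dif_neg (fun hA => hn (hAS hA)), dif_neg (fun h => hn h.1)]

lemma pfaux_image (A B S : Set ℕ) (e : ↥A ≃ ↥B) (e' : ↥(S \ A) ≃ ↥(S \ B)) :
    pfaux A S e e' '' A = B := by
  ext b
  constructor
  · rintro ⟨a, ha, rfl⟩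
    unfold pfaux
    rw [dif_pos ha]
    exact (e ⟨a, ha⟩).2
  · intro hb
    refine ⟨(e.symm ⟨b, hb⟩ : ℕ), (e.symm ⟨b, hb⟩).2, ?_⟩
    unfold pfaux
    rw [dif_pos (e.symm ⟨b, hb⟩).2]
    simp

theorem stmt_4 (𝒰 : Ultrafilter ℕ) (h𝒰 : ∀ n : ℕ, {n} ∉ 𝒰)
    (A B : Set ℕ) (hA : A.Infinite) (hB : B.Infinite)
    (hA𝒰 : A ∉ 𝒰) (hB𝒰 : B ∉ 𝒰) :
    ∃ h : Equiv.Perm ℕ, h '' A = B ∧ ∀ U : Set ℕ, h '' U ∈ 𝒰 ↔ U ∈ 𝒰 := by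
  classical
  -- finite sets are not in 𝒰
  have hfin : ∀ s : Set ℕ, s.Finite → s ∉ 𝒰 := by
    intro s hs
    refine Set.Finite.induction_on (motive := fun s _ => s ∉ 𝒰) s hs (Ultrafilter.empty_notMem (f := 𝒰)) ?_
    intro a t _ _ ih
    rw [Set.insert_eq, Ultrafilter.union_mem_iff]
    rintro (h | h)
    · exact h𝒰 _ h
    · exact ih h
  set D : Set ℕ := Aᶜ ∩ Bᶜ with hDdef
  have hDmem : D ∈ 𝒰 :=
    Filter.inter_mem (Ultrafilter.compl_mem_iff_notMem.2 hA𝒰)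
      (Ultrafilter.compl_mem_iff_notMem.2 hB𝒰)
  have hDinf : D.Infinite := fun hf => hfin D hf hDmem
  -- split D into two infinite pieces, pick one not in 𝒰
  obtain ⟨C, hCinf, hCD, hC𝒰⟩ : ∃ C : Set ℕ, C.Infinite ∧ C ⊆ D ∧ C ∉ 𝒰 := by
    set f0 : ℕ ↪ ↥D := Set.Infinite.natEmbedding D hDinf with hf0
    set C0 : Set ℕ := Set.range fun n => (f0 (2 * n) : ℕ) with hC0
    set C1 : Set ℕ := Set.range fun n => (f0 (2 * n + 1) : ℕ) with hC1
    have hinj : ∀ k l : ℕ, (f0 k : ℕ) = (f0 l : ℕ) → k = l := by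
      intro k l h
      exact f0.injective (Subtype.coe_injective h)
    have hC0inf : C0.Infinite := by
      apply Set.infinite_range_of_injective
      intro a b h
      have := hinj _ _ h; omega
    have hC1inf : C1.Infinite := by
      apply Set.infinite_range_of_injective
      intro a b h
      have := hinj _ _ h; omega
    have hC0D : C0 ⊆ D := by rintro _ ⟨n, rfl⟩; exact (f0 (2 * n)).2
    have hC1D : C1 ⊆ D := by rintro _ ⟨n, rfl⟩; exact (f0 (2 * n + 1)).2
    have hdisj : C0 ∩ C1 = ∅ := by
      ext x
      simp only [Set.mem_inter_iff, Set.mem_empty_iff_false, iff_false, not_and]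
      rintro ⟨n, rfl⟩ ⟨m, hm⟩
      have := hinj _ _ hm; omega
    by_cases h : C0 ∈ 𝒰
    · refine ⟨C1, hC1inf, hC1D, fun h1 => ?_⟩
      have : C0 ∩ C1 ∈ 𝒰 := Filter.inter_mem h h1
      rw [hdisj] at this
      exact Ultrafilter.empty_notMem (f := 𝒰) this
    · exact ⟨C0, hC0inf, hC0D, h⟩
  set S : Set ℕ := A ∪ B ∪ C with hSdef
  have hAS : A ⊆ S := fun x hx => Or.inl (Or.inl hx)
  have hBS : B ⊆ S := fun x hx => Or.inl (Or.inr hx)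
  have hCS : C ⊆ S := fun x hx => Or.inr hx
  have hS𝒰 : S ∉ 𝒰 := by
    rw [hSdef]
    rw [Ultrafilter.union_mem_iff, Ultrafilter.union_mem_iff]
    rintro ((h | h) | h)
    · exact hA𝒰 h
    · exact hB𝒰 h
    · exact hC𝒰 h
  have hSc : Sᶜ ∈ 𝒰 := Ultrafilter.compl_mem_iff_notMem.2 hS𝒰
  -- all four pieces are countably infinite
  have hSAinf : (S \ A).Infinite :=
    hCinf.mono (fun x hx => ⟨hCS hx, (hCD hx).1⟩)
  have hSBinf : (S \ B).Infinite :=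
    hCinf.mono (fun x hx => ⟨hCS hx, (hCD hx).2⟩)
  haveI : Infinite ↥A := hA.to_subtype
  haveI : Infinite ↥B := hB.to_subtype
  haveI : Infinite ↥(S \ A) := hSAinf.to_subtype
  haveI : Infinite ↥(S \ B) := hSBinf.to_subtype
  obtain ⟨e⟩ : Nonempty (↥A ≃ ↥B) := nonempty_equiv_of_countable
  obtain ⟨e'⟩ : Nonempty (↥(S \ A) ≃ ↥(S \ B)) := nonempty_equiv_of_countable
  refine ⟨⟨pfaux A S e e', pfaux B S e.symm e'.symm,
    pfaux_left A B S hBS e e', ?_⟩, ?_, ?_⟩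
  · have := pfaux_left B A S hAS e.symm e'.symm
    simp at this; exact this
  · exact pfaux_image A B S e e'
  · intro U
    show pfaux A S e e' '' U ∈ 𝒰 ↔ U ∈ 𝒰
    have key : pfaux A S e e' '' U ∩ Sᶜ = U ∩ Sᶜ := by
      ext x
      constructor
      · rintro ⟨⟨u, hu, rfl⟩, hx⟩
        have huS : u ∉ S := fun hS => hx (pfaux_mem_S A B S hBS e e' hS)
        have hfix := pfaux_fix A S e e' huS hAS
        rw [hfix]
        rw [hfix] at hx
        exact ⟨hu, hx⟩
      · rintro ⟨hxU, hxS⟩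
        refine ⟨⟨x, hxU, ?_⟩, hxS⟩
        exact pfaux_fix A S e e' hxS hAS
    constructor
    · intro h
      have : pfaux A S e e' '' U ∩ Sᶜ ∈ 𝒰 := Filter.inter_mem h hSc
      rw [key] at this
      exact Filter.mem_of_superset this Set.inter_subset_left
    · intro h
      have : U ∩ Sᶜ ∈ 𝒰 := Filter.inter_mem h hSc
      rw [← key] at this
      exact Filter.mem_of_superset this Set.inter_subset_left
end
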